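/- For any type (alphabet) α, the free group FreeGroup α is residually nilpotent: the intersection over all d ≥ 1 of the lower central series subgroups Γ_d(FreeGroup α) is the trivial subgroup. -/

import Mathlib

namespace ResNilp
noncomputable section

open MonoidAlgebra Finset
open scoped commutatorElement

variable {γ : Type*}

abbrev P (γ : Type*) := MonoidAlgebra ℤ (FreeMonoid γ)

/-- vanishing below degree `d`. -/
def Vp (d : ℕ) (p : P γ) : Prop := ∀ w : FreeMonoid γ, w.length < d → p.coeff w = 0

lemma Vp.zero (d : ℕ) : Vp d (0 : P γ) := fun _ _ => rfl

lemma Vp.zero_deg (p : P γ) : Vp 0 p := fun _ hw => absurd hw (Nat.not_lt_zero _)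

lemma Vp.add {d} {p q : P γ} (hp : Vp d p) (hq : Vp d q) : Vp d (p + q) := fun w hw => by
  rw [MonoidAlgebra.coeff_add, Finsupp.add_apply, hp w hw, hq w hw, add_zero]

lemma Vp.neg {d} {p : P γ} (hp : Vp d p) : Vp d (-p) := fun w hw => by
  rw [MonoidAlgebra.coeff_neg, Finsupp.neg_apply, hp w hw, neg_zero]

lemma Vp.sub {d} {p q : P γ} (hp : Vp d p) (hq : Vp d q) : Vp d (p - q) := by
  simpa [sub_eq_add_neg] using hp.add hq.neg

lemma Vp.mono {d e} (h : d ≤ e) {p : P γ} (hp : Vp e p) : Vp d p :=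
  fun w hw => hp w (lt_of_lt_of_le hw h)

lemma Vp.mul {d e} {p q : P γ} (hp : Vp d p) (hq : Vp e q) : Vp (d + e) (p * q) := by
  classical
  intro w hw
  rw [MonoidAlgebra.mul_apply, Finsupp.sum]
  refine Finset.sum_eq_zero fun u hu => ?_
  rw [Finsupp.sum]
  refine Finset.sum_eq_zero fun v hv => ?_
  split_ifs with h
  · have hlen : u.length + v.length = w.length := by rw [← h, FreeMonoid.length_mul]
    by_cases hu' : u.length < d
    · rw [hp u hu', zero_mul]
    · have : v.length < e := by omega
      rw [hq v this, mul_zero]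
  · rfl

lemma Vp.mul_right {d} {p : P γ} (hp : Vp d p) (q : P γ) : Vp d (p * q) := by
  simpa using hp.mul (Vp.zero_deg q)

lemma Vp.mul_left {d} {p : P γ} (hp : Vp d p) (q : P γ) : Vp d (q * p) := by
  simpa using (Vp.zero_deg q).mul hp

/-- The congruence identifying polynomials agreeing below degree `n`. -/
def lowCon (γ : Type*) (n : ℕ) : RingCon (P γ) where
  r p q := Vp n (p - q)
  iseqv := ⟨fun p => by simpa using Vp.zero n,
    fun {p q} h => by simpa [neg_sub] using h.neg,
    fun {p q r} h1 h2 => by simpa [sub_add_sub_cancel] using h1.add h2⟩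
  add' := fun {a b c d} h1 h2 => by
    show Vp n (a + c - (b + d))
    have h : a + c - (b + d) = (a - b) + (c - d) := by abel
    rw [h]; exact h1.add h2
  mul' := fun {a b c d} h1 h2 => by
    show Vp n (a * c - b * d)
    have h : a * c - b * d = (a - b) * c + b * (c - d) := by noncomm_ring
    rw [h]; exact (h1.mul_right c).add (h2.mul_left b)

lemma lowCon_eq {n : ℕ} {p q : P γ} :
    (lowCon γ n).mk' p = (lowCon γ n).mk' q ↔ Vp n (p - q) := by
  change (↑p : (lowCon γ n).Quotient) = ↑q ↔ _
  exact RingCon.eq _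

lemma lowCon_mk'_surjective {n : ℕ} : Function.Surjective (lowCon γ n).mk' :=
  fun x => Quotient.inductionOn' x fun p => ⟨p, rfl⟩



section Units

variable (γ : Type*) (n : ℕ)
variable {γ}

/-- The degree-one generator. -/
def sX (a : γ) : P γ := MonoidAlgebra.single (FreeMonoid.of a) 1

lemma length_of_pow (a : γ) (m : ℕ) : ((FreeMonoid.of a) ^ m).length = m := by
  induction m with
  | zero => rfl
  | succ m ih => rw [pow_succ, FreeMonoid.length_mul, ih, FreeMonoid.length_of]

lemma neg_sX_pow (a : γ) (m : ℕ) :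
    (-(sX a)) ^ m = MonoidAlgebra.single ((FreeMonoid.of a) ^ m) ((-1 : ℤ) ^ m) := by
  have h : (-(sX a)) ^ m = (-1 : ℤ) ^ m • (sX a) ^ m := by
    rw [neg_pow]; simp [smul_smul]
  rw [h, sX, MonoidAlgebra.single_pow, one_pow, MonoidAlgebra.smul_single, smul_eq_mul, mul_one]

lemma Vp_neg_sX_pow (a : γ) : Vp n ((-(sX a)) ^ n) := by
  classical
  intro w hw
  rw [neg_sX_pow]
  rw [MonoidAlgebra.coeff_single_apply, if_neg]
  intro h
  rw [← h, length_of_pow] at hw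
  omega

/-- image of the positive generator `1 + X_a`. -/
def gTrue (a : γ) : P γ := 1 + sX a

/-- truncated geometric series, the inverse of `1 + X_a` modulo degree `n`. -/
def gFalse (a : γ) : P γ := ∑ m ∈ Finset.range n, (-(sX a)) ^ m

lemma gTrue_mul_gFalse (a : γ) : gTrue a * gFalse n a = 1 - (-(sX a)) ^ n := by
  have h : gTrue a = -((-(sX a)) - 1) := by rw [gTrue]; noncomm_ring
  rw [h, gFalse, neg_mul, mul_geom_sum, neg_sub]

lemma gFalse_mul_gTrue (a : γ) : gFalse n a * gTrue a = 1 - (-(sX a)) ^ n := by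
  have h : gTrue a = -((-(sX a)) - 1) := by rw [gTrue]; noncomm_ring
  rw [h, gFalse, mul_neg, geom_sum_mul, neg_sub]

variable (γ)

/-- The Magnus unit `1 + X_a`. -/
def U (a : γ) : ((lowCon γ n).Quotient)ˣ where
  val := (lowCon γ n).mk' (gTrue a)
  inv := (lowCon γ n).mk' (gFalse n a)
  val_inv := by
    rw [← map_mul, ← map_one (lowCon γ n).mk', lowCon_eq, gTrue_mul_gFalse]
    simpa using (Vp_neg_sX_pow n a).neg
  inv_val := by
    rw [← map_mul, ← map_one (lowCon γ n).mk', lowCon_eq, gFalse_mul_gTrue]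
    simpa using (Vp_neg_sX_pow n a).neg

/-- The filtration subgroups of the unit group. -/
def Hgrp (d : ℕ) : Subgroup (((lowCon γ n).Quotient)ˣ) where
  carrier := {u | ∃ p : P γ, Vp d p ∧ (lowCon γ n).mk' p = (u : (lowCon γ n).Quotient) - 1}
  one_mem' := ⟨0, Vp.zero d, by simp⟩
  mul_mem' := by
    rintro u v ⟨p, hp, hpu⟩ ⟨q, hq, hqv⟩
    refine ⟨p * q + p + q, ((hp.mul_right q).add hp).add hq, ?_⟩
    have h : ((u * v : _ˣ) : (lowCon γ n).Quotient) = (u : _) * v := rfl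
    rw [map_add, map_add, map_mul, hpu, hqv, h]
    simp only [sub_mul, mul_sub, mul_one, one_mul]
    abel
  inv_mem' := by
    rintro u ⟨p, hp, hpu⟩
    obtain ⟨q, hq⟩ := lowCon_mk'_surjective ((u⁻¹ : _ˣ) : (lowCon γ n).Quotient)
    refine ⟨-(q * p), (hp.mul_left q).neg, ?_⟩
    rw [map_neg, map_mul, hq, hpu]
    have h1 : ((u⁻¹ : _ˣ) : (lowCon γ n).Quotient) * u = 1 := u.inv_mul
    rw [mul_sub, mul_one, h1, neg_sub]

variable {γ}

lemma Hgrp_anti {d e : ℕ} (h : d ≤ e) : Hgrp γ n e ≤ Hgrp γ n d := by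
  rintro u ⟨p, hp, hpu⟩; exact ⟨p, hp.mono h, hpu⟩

lemma commutator_mem_Hgrp {d e : ℕ} {u v : ((lowCon γ n).Quotient)ˣ}
    (hu : u ∈ Hgrp γ n d) (hv : v ∈ Hgrp γ n e) : ⁅u, v⁆ ∈ Hgrp γ n (d + e) := by
  obtain ⟨p, hp, hpu⟩ := hu
  obtain ⟨q, hq, hqv⟩ := hv
  obtain ⟨r1, hr1⟩ := lowCon_mk'_surjective ((u⁻¹ : _ˣ) : (lowCon γ n).Quotient)
  obtain ⟨r2, hr2⟩ := lowCon_mk'_surjective ((v⁻¹ : _ˣ) : (lowCon γ n).Quotient)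
  refine ⟨(p * q - q * p) * (r1 * r2),
    (((hp.mul hq).sub (Vp.mono (le_of_eq (add_comm d e)) (hq.mul hp))).mul_right _), ?_⟩
  rw [map_mul, map_sub, map_mul, map_mul, map_mul, hpu, hqv, hr1, hr2]
  set A := ((u : _ˣ) : (lowCon γ n).Quotient) with hA
  set B := ((v : _ˣ) : (lowCon γ n).Quotient) with hB
  set A' := ((u⁻¹ : _ˣ) : (lowCon γ n).Quotient) with hA'
  set B' := ((v⁻¹ : _ˣ) : (lowCon γ n).Quotient) with hB'
  have hAA' : A * A' = 1 := u.mul_inv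
  have hBB' : B * B' = 1 := v.mul_inv
  have hcoe : ((⁅u, v⁆ : _ˣ) : (lowCon γ n).Quotient) = A * B * A' * B' := rfl
  rw [hcoe]
  have h1 : (A - 1) * (B - 1) - (B - 1) * (A - 1) = A * B - B * A := by
    simp only [sub_mul, mul_sub, mul_one, one_mul]
    abel
  rw [h1, sub_mul]
  have h2 : B * A * (A' * B') = 1 := by
    rw [mul_assoc B A, ← mul_assoc A A' B', hAA', one_mul, hBB']
  have h3 : A * B * (A' * B') = A * B * A' * B' := by simp [mul_assoc]
  rw [h2, h3]

variable (γ)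

/-- The Magnus homomorphism. -/
def mu : FreeGroup γ →* ((lowCon γ n).Quotient)ˣ := FreeGroup.lift (fun a => U γ n a)

variable {γ}

lemma mu_mem_Hgrp_one (x : FreeGroup γ) : mu γ n x ∈ Hgrp γ n 1 := by
  classical
  have hrange : Set.range (fun a : γ => U γ n a) ⊆ ((Hgrp γ n 1 : Subgroup _) : Set _) := by
    rintro _ ⟨a, rfl⟩
    refine ⟨sX a, ?_, ?_⟩
    · intro w hw
      rw [sX, MonoidAlgebra.coeff_single_apply, if_neg]
      intro h
      rw [← h, FreeMonoid.length_of] at hw; omega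
    · have h : ((U γ n a : _ˣ) : (lowCon γ n).Quotient) = (lowCon γ n).mk' (gTrue a) := rfl
      rw [h, gTrue, map_add, map_one, add_sub_cancel_left]
  exact FreeGroup.range_lift_le hrange ⟨x, rfl⟩

lemma mu_lcs (d : ℕ) (x : FreeGroup γ) (hx : x ∈ (⊤ : Subgroup (FreeGroup γ)).lowerCentralSeries d) :
    mu γ n x ∈ Hgrp γ n (d + 1) := by
  induction d generalizing x with
  | zero => exact mu_mem_Hgrp_one n x
  | succ d ih =>
    rw [Subgroup.lowerCentralSeries_succ] at hx
    have hle : ⁅(⊤ : Subgroup (FreeGroup γ)).lowerCentralSeries d, (⊤ : Subgroup (FreeGroup γ))⁆ ≤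
        (Hgrp γ n (d + 1 + 1)).comap (mu γ n) := by
      rw [Subgroup.commutator_le]
      intro g1 hg1 g2 _
      have h : mu γ n ⁅g1, g2⁆ = ⁅mu γ n g1, mu γ n g2⁆ := map_commutatorElement _ _ _
      simp only [Subgroup.mem_comap, h]
      exact commutator_mem_Hgrp n (ih g1 hg1) (mu_mem_Hgrp_one n g2)
    exact hle hx

end Units

section Coeff

open scoped Classical

variable {γ : Type*} (n : ℕ)

lemma single_ofList_mul_apply (u : List γ) (c : ℤ) (q : P γ) (w : List γ) :
    (MonoidAlgebra.single (FreeMonoid.ofList u) c * q).coeff (FreeMonoid.ofList w)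
      = if u <+: w then c * q.coeff (FreeMonoid.ofList (w.drop u.length)) else 0 := by
  classical
  by_cases h : u <+: w
  · obtain ⟨v, rfl⟩ := h
    rw [if_pos ⟨v, rfl⟩, List.drop_left]
    have H : ∀ z : FreeMonoid γ,
        FreeMonoid.ofList u * z = FreeMonoid.ofList (u ++ v) ↔ z = FreeMonoid.ofList v := by
      intro z
      constructor
      · intro hz
        have hz' := congrArg FreeMonoid.toList hz
        rw [FreeMonoid.toList_mul, FreeMonoid.toList_ofList, FreeMonoid.toList_ofList] at hz'
        have h2 := List.append_cancel_left hz'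
        rw [← h2, FreeMonoid.ofList_toList]
      · intro hz
        rw [hz]
        exact (FreeMonoid.ofList_append u v).symm
    exact MonoidAlgebra.coeff_single_mul_eq_mul_coeff _ (fun z _ => H z)
  · rw [if_neg h]
    refine MonoidAlgebra.single_mul_apply_of_not_exists_mul _ _ ?_
    rintro ⟨d, hd⟩
    refine h ⟨FreeMonoid.toList d, ?_⟩
    have := congrArg FreeMonoid.toList hd
    rw [FreeMonoid.toList_ofList, FreeMonoid.toList_mul, FreeMonoid.toList_ofList] at this
    exact this.symm

lemma gTrue_mul_apply (a : γ) (q : P γ) (w : List γ) :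
    (gTrue a * q).coeff (FreeMonoid.ofList w)
      = q.coeff (FreeMonoid.ofList w)
        + (if [a] <+: w then q.coeff (FreeMonoid.ofList (w.drop 1)) else 0) := by
  classical
  have h1 : gTrue a = MonoidAlgebra.single (FreeMonoid.ofList []) 1
      + MonoidAlgebra.single (FreeMonoid.ofList [a]) 1 := rfl
  rw [h1, add_mul, MonoidAlgebra.coeff_add, Finsupp.add_apply, single_ofList_mul_apply, single_ofList_mul_apply,
    if_pos (List.nil_prefix)]
  simp

lemma of_pow_eq_ofList_replicate (a : γ) (m : ℕ) :
    (FreeMonoid.of a) ^ m = FreeMonoid.ofList (List.replicate m a) := by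
  induction m with
  | zero => rfl
  | succ m ih => rw [pow_succ', ih, List.replicate_succ]; rfl

lemma gFalse_mul_apply (a : γ) (q : P γ) (w : List γ) :
    (gFalse n a * q).coeff (FreeMonoid.ofList w)
      = ∑ m ∈ Finset.range n,
          (if List.replicate m a <+: w
            then (-1 : ℤ) ^ m * q.coeff (FreeMonoid.ofList (w.drop m)) else 0) := by
  classical
  have h1 : gFalse n a = ∑ m ∈ Finset.range n,
      MonoidAlgebra.single (FreeMonoid.ofList (List.replicate m a)) ((-1 : ℤ) ^ m) := by
    rw [gFalse]
    refine Finset.sum_congr rfl fun m _ => ?_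
    rw [neg_sX_pow, of_pow_eq_ofList_replicate]
  rw [h1, Finset.sum_mul, MonoidAlgebra.coeff_sum, Finsupp.finset_sum_apply]
  refine Finset.sum_congr rfl fun m _ => ?_
  rw [single_ofList_mul_apply, List.length_replicate]

variable (γ) in
/-- polynomial attached to a letter. -/
def gg (p : γ × Bool) : P γ := cond p.2 (gTrue p.1) (gFalse n p.1)

variable (γ) in
/-- The Magnus polynomial of a word. -/
def nu (L : List (γ × Bool)) : P γ := (L.map (gg γ n)).prod

/-- The expected leading coefficient. -/
def eps (L : List (γ × Bool)) : ℤ := (L.map (fun p => cond p.2 1 (-1))).prod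

lemma nu_nil : nu γ n [] = 1 := rfl

lemma nu_cons (p : γ × Bool) (L : List (γ × Bool)) :
    nu γ n (p :: L) = gg γ n p * nu γ n L := by
  rw [nu, List.map_cons, List.prod_cons]; rfl

lemma eps_cons (p : γ × Bool) (L : List (γ × Bool)) :
    eps (p :: L) = (cond p.2 1 (-1)) * eps L := by
  rw [eps, List.map_cons, List.prod_cons]; rfl

lemma eps_eq_one_or (L : List (γ × Bool)) : eps L = 1 ∨ eps L = -1 := by
  induction L with
  | nil => left; rfl
  | cons p L ih =>
    rw [eps_cons]
    cases p.2 <;> rcases ih with h | h <;> simp [h]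

lemma eps_ne_zero (L : List (γ × Bool)) : eps L ≠ 0 := by
  rcases eps_eq_one_or L with h | h <;> rw [h] <;> omega

lemma one_apply_ofList (W : List γ) (hW : W ≠ []) :
    (1 : P γ).coeff (FreeMonoid.ofList W) = 0 := by
  classical
  rw [MonoidAlgebra.one_def, MonoidAlgebra.coeff_single_apply, if_neg]
  intro h
  have := congrArg FreeMonoid.toList h
  rw [FreeMonoid.toList_ofList] at this
  exact hW this.symm

lemma coeff_nu_eq_zero :
    ∀ (L : List (γ × Bool)) (W : List γ),
      (L.map Prod.fst).IsChain (· ≠ ·) → W.IsChain (· ≠ ·) →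
      L.length ≤ W.length → W ≠ L.map Prod.fst →
      (nu γ n L).coeff (FreeMonoid.ofList W) = 0 := by
  intro L
  induction L with
  | nil =>
    intro W _ _ _ hne
    exact one_apply_ofList W (by simpa using hne)
  | cons p L' ih =>
    obtain ⟨a, e⟩ := p
    intro W hcL hcW hlen hne
    have hcL' : (L'.map Prod.fst).IsChain (· ≠ ·) := by
      rw [List.map_cons] at hcL; exact hcL.tail
    have hlen' : L'.length ≤ W.length := by
      simp only [List.length_cons] at hlen; omega
    have hWne' : W ≠ L'.map Prod.fst := by
      intro h
      have := congrArg List.length h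
      simp only [List.length_map] at this
      simp only [List.length_cons] at hlen
      omega
    have hterm0 : (nu γ n L').coeff (FreeMonoid.ofList W) = 0 := ih W hcL' hcW hlen' hWne'
    have hterm1 : ∀ V, W = a :: V → (nu γ n L').coeff (FreeMonoid.ofList V) = 0 := by
      rintro V rfl
      refine ih V hcL' hcW.tail ?_ ?_
      · simp only [List.length_cons] at hlen ⊢; omega
      · intro h
        exact hne (by rw [List.map_cons, ← h])
    rw [nu_cons]
    cases e with
    | true =>
      have hgg : gg γ n (a, true) = gTrue a := rfl
      rw [hgg, gTrue_mul_apply, hterm0, zero_add]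
      split_ifs with h
      · obtain ⟨V, rfl⟩ := h
        simpa using hterm1 V rfl
      · rfl
    | false =>
      have hgg : gg γ n (a, false) = gFalse n a := rfl
      rw [hgg, gFalse_mul_apply]
      refine Finset.sum_eq_zero fun m _ => ?_
      split_ifs with h
      · match m, h with
        | 0, h => simpa using hterm0
        | 1, h =>
          obtain ⟨V, rfl⟩ := h
          simpa using hterm1 V rfl
        | (m+2), h =>
          obtain ⟨t, rfl⟩ := h
          exfalso
          simp only [List.replicate_succ, List.cons_append, List.isChain_cons_cons] at hcW
          exact hcW.1 rfl
      · rfl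

lemma coeff_nu_self (hn : 2 ≤ n) :
    ∀ L : List (γ × Bool), (L.map Prod.fst).IsChain (· ≠ ·) →
      (nu γ n L).coeff (FreeMonoid.ofList (L.map Prod.fst)) = eps L := by
  intro L
  induction L with
  | nil =>
    intro _
    show (1 : P γ).coeff (FreeMonoid.ofList []) = eps []
    rw [MonoidAlgebra.one_def]
    exact Finsupp.single_eq_same
  | cons p L' ih =>
    obtain ⟨a, e⟩ := p
    intro hcL
    rw [List.map_cons] at hcL ⊢
    have hcL' : (L'.map Prod.fst).IsChain (· ≠ ·) := hcL.tail
    have hzero : (nu γ n L').coeff (FreeMonoid.ofList (a :: L'.map Prod.fst)) = 0 := by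
      refine coeff_nu_eq_zero n L' (a :: L'.map Prod.fst) hcL' hcL (by simp) ?_
      intro h
      have := congrArg List.length h
      simp at this
    rw [nu_cons]
    cases e with
    | true =>
      have hgg : gg γ n (a, true) = gTrue a := rfl
      rw [hgg, gTrue_mul_apply, hzero, zero_add, if_pos ⟨L'.map Prod.fst, rfl⟩, eps_cons]
      simpa using ih hcL'
    | false =>
      have hgg : gg γ n (a, false) = gFalse n a := rfl
      rw [hgg, gFalse_mul_apply]
      have hmain : ∑ m ∈ Finset.range n,
          (if List.replicate m a <+: (a :: L'.map Prod.fst)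
            then (-1:ℤ)^m * (nu γ n L').coeff (FreeMonoid.ofList ((a :: L'.map Prod.fst).drop m))
            else 0) = - eps L' := by
        rw [Finset.sum_eq_single_of_mem 1 (Finset.mem_range.mpr (by omega))]
        · rw [if_pos ⟨L'.map Prod.fst, rfl⟩]
          simpa using ih hcL'
        · intro m hm hm1
          match m, hm1 with
          | 0, _ => simpa using hzero
          | 1, h => exact absurd rfl h
          | (m+2), _ =>
            rw [if_neg]
            rintro ⟨t, ht⟩
            have h1 : a :: a :: (List.replicate m a ++ t) = a :: L'.map Prod.fst := by
              simpa [List.replicate_succ] using ht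
            have h2 : L'.map Prod.fst = a :: (List.replicate m a ++ t) := by
              injection h1 with _ h2
              exact h2.symm
            rw [h2] at hcL
            exact (List.isChain_cons_cons.mp hcL).1 rfl
      rw [hmain, eps_cons]
      simp

end Coeff

section Encode

variable {α : Type*}

/-- The embedding `a ↦ (some a) ⬝ t` of a free group into a larger one, used to make
reduced words have pairwise distinct adjacent letters. -/
def psi (α : Type*) : FreeGroup α →* FreeGroup (Option α) :=
  FreeGroup.lift (fun a => FreeGroup.of (some a) * FreeGroup.of (none : Option α))

/-- Explicit word representing the `psi`-image of a word, with no equal adjacent letters. -/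
def enc : Bool → List (α × Bool) → List (Option α × Bool)
  | false, [] => []
  | false, (a, false) :: L => (none, false) :: (some a, false) :: enc false L
  | false, (a, true) :: L => (some a, true) :: enc true L
  | true, [] => [(none, true)]
  | true, (a, false) :: L => (some a, false) :: enc false L
  | true, (a, true) :: L => (none, true) :: (some a, true) :: enc true L

lemma mk_cons (a : α) (b : Bool) (L : List (α × Bool)) :
    FreeGroup.mk ((a, b) :: L)
      = (cond b (FreeGroup.of a) (FreeGroup.of a)⁻¹) * FreeGroup.mk L := by
  have h : FreeGroup.mk ((a, b) :: L) = FreeGroup.mk [(a, b)] * FreeGroup.mk L := by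
    rw [FreeGroup.mul_mk]
    rfl
  rw [h]
  cases b
  · have h2 : FreeGroup.mk [(a, false)] = (FreeGroup.of a)⁻¹ := by
      rw [show (FreeGroup.of a) = FreeGroup.mk [(a, true)] from rfl, FreeGroup.inv_mk]
      simp [FreeGroup.invRev]
    rw [h2]
    rfl
  · rfl

lemma enc_spec : ∀ (L : List (α × Bool)) (b : Bool),
    FreeGroup.mk (enc b L)
      = (cond b (FreeGroup.of (none : Option α)) 1) * psi α (FreeGroup.mk L) := by
  intro L
  induction L with
  | nil =>
    intro b
    cases b
    · show FreeGroup.mk [] = _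
      rw [← FreeGroup.one_eq_mk, show FreeGroup.mk ([] : List (α × Bool)) = 1 from
        (FreeGroup.one_eq_mk).symm]
      simp
    · show FreeGroup.mk [((none : Option α), true)] = _
      rw [show FreeGroup.mk ([] : List (α × Bool)) = 1 from (FreeGroup.one_eq_mk).symm]
      simp
      rfl
  | cons p L ih =>
    obtain ⟨a, e⟩ := p
    intro b
    have hof : psi α (FreeGroup.of a)
        = FreeGroup.of (some a) * FreeGroup.of (none : Option α) := FreeGroup.lift_apply_of
    cases b <;> cases e
    · show FreeGroup.mk ((none, false) :: (some a, false) :: enc false L) = _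
      have hpsi : psi α (FreeGroup.mk ((a, false) :: L))
          = (FreeGroup.of (some a) * FreeGroup.of (none : Option α))⁻¹ * psi α (FreeGroup.mk L) := by
        rw [mk_cons]
        simp only [Bool.cond_false]
        rw [map_mul, map_inv, hof]
      rw [mk_cons, mk_cons, ih false, hpsi]
      simp only [Bool.cond_true, Bool.cond_false]
      group
    · show FreeGroup.mk ((some a, true) :: enc true L) = _
      have hpsi : psi α (FreeGroup.mk ((a, true) :: L))
          = (FreeGroup.of (some a) * FreeGroup.of (none : Option α)) * psi α (FreeGroup.mk L) := by
        rw [mk_cons]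
        simp only [Bool.cond_true]
        rw [map_mul, hof]
      rw [mk_cons, ih true, hpsi]
      simp only [Bool.cond_true, Bool.cond_false]
      group
    · show FreeGroup.mk ((some a, false) :: enc false L) = _
      have hpsi : psi α (FreeGroup.mk ((a, false) :: L))
          = (FreeGroup.of (some a) * FreeGroup.of (none : Option α))⁻¹ * psi α (FreeGroup.mk L) := by
        rw [mk_cons]
        simp only [Bool.cond_false]
        rw [map_mul, map_inv, hof]
      rw [mk_cons, ih false, hpsi]
      simp only [Bool.cond_true, Bool.cond_false]
      group
    · show FreeGroup.mk ((none, true) :: (some a, true) :: enc true L) = _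
      have hpsi : psi α (FreeGroup.mk ((a, true) :: L))
          = (FreeGroup.of (some a) * FreeGroup.of (none : Option α)) * psi α (FreeGroup.mk L) := by
        rw [mk_cons]
        simp only [Bool.cond_true]
        rw [map_mul, hof]
      rw [mk_cons, mk_cons, ih true, hpsi]
      simp only [Bool.cond_true, Bool.cond_false]
      group

lemma enc_headOK : ∀ (L : List (α × Bool)) (b : Bool) (x : Option α × Bool),
    (enc b L).head? = some x →
    x.1 = none ∨ ∃ a, L.head? = some (a, !b) ∧ x.1 = some a := by
  intro L b x
  match b, L with
  | false, [] => intro h; simp [enc] at h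
  | false, (a, false) :: L => intro h; simp [enc] at h; left; rw [← h]
  | false, (a, true) :: L => intro h; simp [enc] at h; right; exact ⟨a, rfl, by rw [← h]⟩
  | true, [] => intro h; simp [enc] at h; left; rw [← h]
  | true, (a, false) :: L => intro h; simp [enc] at h; right; exact ⟨a, rfl, by rw [← h]⟩
  | true, (a, true) :: L => intro h; simp [enc] at h; left; rw [← h]

/-- the reduced-word condition. -/
def Rw (L : List (α × Bool)) : Prop := L.IsChain (fun p q => p.1 = q.1 → p.2 = q.2)

lemma junction (L : List (α × Bool)) (b : Bool) (a : α)
    (h : ∀ c, L.head? = some (c, !b) → a ≠ c) :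
    ∀ y ∈ ((enc b L).map Prod.fst).head?, (some a : Option α) ≠ y := by
  intro y hy
  rw [List.head?_map] at hy
  have hy' : ((enc b L).head?).map Prod.fst = some y := hy
  obtain ⟨x, hx, hxy⟩ := Option.map_eq_some_iff.mp hy'
  rcases enc_headOK L b x hx with h1 | ⟨c, hc, h2⟩
  · rw [← hxy, h1]; simp
  · rw [← hxy, h2]
    simpa using h c hc

lemma enc_chain : ∀ (L : List (α × Bool)), Rw L → ∀ b : Bool,
    ((enc b L).map Prod.fst).IsChain (· ≠ ·) := by
  intro L
  induction L with
  | nil => intro _ b; cases b <;> simp [enc]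
  | cons p L ih =>
    obtain ⟨a, e⟩ := p
    intro hRw b
    have hRw' : Rw L := hRw.tail
    have hadj : ∀ y ∈ L.head?, (a = y.1 → e = y.2) := (List.isChain_cons.mp hRw).1
    have hIH := ih hRw'
    cases b <;> cases e
    · show (((none, false) :: (some a, false) :: enc false L).map Prod.fst).IsChain (· ≠ ·)
      rw [List.map_cons, List.map_cons, List.isChain_cons, List.isChain_cons]
      refine ⟨by simp, ?_, hIH false⟩
      refine junction L false a fun c hc heq => ?_
      have := hadj (c, true) (Option.mem_def.mpr hc) heq
      simp at this
    · show (((some a, true) :: enc true L).map Prod.fst).IsChain (· ≠ ·)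
      rw [List.map_cons, List.isChain_cons]
      refine ⟨?_, hIH true⟩
      refine junction L true a fun c hc heq => ?_
      have := hadj (c, false) (Option.mem_def.mpr hc) heq
      simp at this
    · show (((some a, false) :: enc false L).map Prod.fst).IsChain (· ≠ ·)
      rw [List.map_cons, List.isChain_cons]
      refine ⟨?_, hIH false⟩
      refine junction L false a fun c hc heq => ?_
      have := hadj (c, true) (Option.mem_def.mpr hc) heq
      simp at this
    · show (((none, true) :: (some a, true) :: enc true L).map Prod.fst).IsChain (· ≠ ·)
      rw [List.map_cons, List.map_cons, List.isChain_cons, List.isChain_cons]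
      refine ⟨by simp, ?_, hIH true⟩
      refine junction L true a fun c hc heq => ?_
      have := hadj (c, false) (Option.mem_def.mpr hc) heq
      simp at this

lemma enc_ne_nil {L : List (α × Bool)} (h : L ≠ []) : enc false L ≠ [] := by
  match L with
  | [] => exact absurd rfl h
  | (a, false) :: L => simp [enc]
  | (a, true) :: L => simp [enc]

lemma chain'_of_noStep : ∀ M : List (α × Bool),
    (∀ (L2 L3 : List (α × Bool)) (y : α) (b : Bool), M ≠ L2 ++ (y, b) :: (y, !b) :: L3) →
    Rw M := by
  intro M
  induction M with
  | nil => intro _; exact List.isChain_nil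
  | cons p M ih =>
    intro H
    match M with
    | [] => exact List.isChain_singleton p
    | q :: M' =>
      obtain ⟨q1, q2⟩ := q
      rw [Rw, List.isChain_cons_cons]
      constructor
      · intro h1
        by_contra h2
        have h3 : q2 = !p.2 := by revert h2; cases p.2 <;> cases q2 <;> simp
        have hq : (q1, q2) = (p.1, !p.2) := by
          rw [Prod.mk.injEq]
          exact ⟨h1.symm, h3⟩
        exact H [] M' p.1 p.2 (by rw [List.nil_append, ← hq])
      · refine ih fun L2 L3 y b h => H (p :: L2) L3 y b ?_
        rw [List.cons_append, h]

lemma rw_toWord [DecidableEq α] (x : FreeGroup α) : Rw x.toWord := by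
  refine chain'_of_noStep _ fun L2 L3 y b heq => ?_
  have h' : FreeGroup.reduce x.toWord = L2 ++ (y, b) :: (y, !b) :: L3 := by
    rw [FreeGroup.reduce_toWord]
    exact heq
  exact FreeGroup.reduce.not h'

end Encode
end
end ResNilp

open ResNilp in
/-- The free group on any alphabet `α` is residually nilpotent: the intersection of its
lower central series subgroups is trivial.

(Note: Mathlib's `lowerCentralSeries F d` is `Γ_{d+1} F` in the paper's indexing, so ranging
over all `d : ℕ` is the same as ranging over all `d ≥ 1` in the paper.) -/
theorem freeGroup_residually_nilpotent (α : Type*) :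
    (⨅ d : ℕ, (⊤ : Subgroup (FreeGroup α)).lowerCentralSeries d) = ⊥ := by
  classical
  rw [eq_bot_iff]
  intro x hx
  rw [Subgroup.mem_bot]
  by_contra hx1
  have hLn : x.toWord ≠ [] := fun h => hx1 (FreeGroup.toWord_eq_nil_iff.mp h)
  have hRw : Rw x.toWord := rw_toWord x
  set E := enc false x.toWord with hE
  have hEchain : ((E.map Prod.fst)).IsChain (· ≠ ·) := enc_chain x.toWord hRw false
  have hEn : E ≠ [] := enc_ne_nil hLn
  set n := E.length + 1 with hn
  have hn2 : 2 ≤ n := by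
    have : 0 < E.length := List.length_pos_iff.mpr hEn
    omega
  have hxd : ∀ d, x ∈ (⊤ : Subgroup (FreeGroup α)).lowerCentralSeries d := fun d => (Subgroup.mem_iInf.mp hx) d
  have hyd : psi α x ∈ (⊤ : Subgroup (FreeGroup (Option α))).lowerCentralSeries n :=
    Subgroup.lowerCentralSeries.map (psi α) n (Subgroup.mem_map.mpr ⟨x, hxd n, rfl⟩)
  have hmu : mu (Option α) n (psi α x) ∈ Hgrp (Option α) n n :=
    Hgrp_anti n (by omega) (mu_lcs n n _ hyd)
  obtain ⟨p, hp, hpu⟩ := hmu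
  have hp0 : (lowCon (Option α) n).mk' p = 0 := by
    rw [← map_zero (lowCon (Option α) n).mk', lowCon_eq]
    simpa using hp
  have hone : ((mu (Option α) n (psi α x) : _ˣ) : (lowCon (Option α) n).Quotient) = 1 := by
    rw [hp0] at hpu
    exact (sub_eq_zero.mp hpu.symm)
  -- now compute the coefficient
  have hmkE : FreeGroup.mk E = psi α x := by
    have := enc_spec x.toWord false
    rw [FreeGroup.mk_toWord] at this
    simpa using this
  have hval : ((mu (Option α) n (psi α x) : _ˣ) : (lowCon (Option α) n).Quotient)
      = (lowCon (Option α) n).mk' (nu (Option α) n E) := by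
    rw [← hmkE]
    have h1 : mu (Option α) n (FreeGroup.mk E)
        = (E.map fun q => cond q.2 (U (Option α) n q.1) (U (Option α) n q.1)⁻¹).prod :=
      FreeGroup.lift_mk
    rw [h1]
    have h2 := map_list_prod (Units.coeHom ((lowCon (Option α) n).Quotient))
      (E.map fun q => cond q.2 (U (Option α) n q.1) (U (Option α) n q.1)⁻¹)
    rw [show (((E.map fun q => cond q.2 (U (Option α) n q.1) (U (Option α) n q.1)⁻¹).prod : _ˣ)
        : (lowCon (Option α) n).Quotient)
      = Units.coeHom ((lowCon (Option α) n).Quotient)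
          (E.map fun q => cond q.2 (U (Option α) n q.1) (U (Option α) n q.1)⁻¹).prod from rfl, h2]
    have h3 : (lowCon (Option α) n).mk' (nu (Option α) n E)
        = ((E.map (gg (Option α) n)).map (lowCon (Option α) n).mk').prod := by
      rw [nu, map_list_prod]
    rw [h3, List.map_map, List.map_map]
    congr 1
    refine List.map_congr_left fun q _ => ?_
    obtain ⟨a, e⟩ := q
    cases e <;> rfl
  have hVp : Vp n (nu (Option α) n E - 1) := by
    refine lowCon_eq.mp ?_
    rw [← hval, hone, map_one]
  have hlen : (FreeMonoid.ofList (E.map Prod.fst)).length < n := by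
    have h : (FreeMonoid.ofList (E.map Prod.fst)).length = E.length := by
      show (E.map Prod.fst).length = E.length
      exact List.length_map Prod.fst
    omega
  have h0 := hVp _ hlen
  have hmapne : E.map Prod.fst ≠ [] := by
    simpa using hEn
  rw [MonoidAlgebra.coeff_sub, Finsupp.sub_apply, coeff_nu_self (n := n) hn2 E hEchain,
    one_apply_ofList _ hmapne, sub_zero] at h0
  exact eps_ne_zero E h0
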